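/- Let F = ₂F₁(1/12, 5/12; 1; 1728x) = Σ_{n≥0} ((1/12)_n (5/12)_n / (n!)²)·(1728)^n x^n. Then F ∈ ℤ[[x]], i.e., every coefficient of F is an integer. -/

import Mathlib

open Finset

lemma exists_root (m c : ℕ) (h : Nat.Coprime 12 m) : ∃ r, m ∣ 12 * r + c := by
  rcases Nat.lt_or_ge m 2 with hm | hm
  · interval_cases m
    · simp [Nat.Coprime] at h
    · exact ⟨0, one_dvd _⟩
  · obtain ⟨b, -, hb⟩ := Nat.exists_mul_mod_eq_one_of_coprime h hm
    refine ⟨b * (c * (m - 1)), ?_⟩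
    have h1 : (12 * b) % m = 1 % m := by
      rw [hb, Nat.mod_eq_of_lt hm]
    have h2 : 12 * (b * (c * (m - 1))) + c ≡ 1 * (c * (m - 1)) + c [MOD m] := by
      exact Nat.ModEq.add_right c
        ((by rw [mul_assoc] : (12 * b) * (c * (m-1)) = 12 * (b * (c * (m-1)))) ▸
          Nat.ModEq.mul_right _ h1)
    have hm1 : m - 1 + 1 = m := by omega
    have h3 : 1 * (c * (m - 1)) + c = c * m := by
      calc 1 * (c * (m-1)) + c = c * ((m-1)+1) := by ring
      _ = c * m := by rw [hm1]
    have h4 : 12 * (b * (c * (m - 1))) + c ≡ 0 [MOD m] :=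
      (h3 ▸ h2).trans ((Nat.modEq_zero_iff_dvd).mpr ⟨c, mul_comm c m⟩)
    exact (Nat.modEq_zero_iff_dvd).mp h4

-- counting lemma: at least n/m values k < n have m ∣ 12k+c
lemma count_ge (m c n : ℕ) (hco : Nat.Coprime 12 m) (h0 : 0 < m) :
    n / m ≤ ((range n).filter (fun k => m ∣ 12 * k + c)).card := by
  obtain ⟨r, hr⟩ := exists_root m c hco
  set r' := r % m with hr'def
  have hrm : r' < m := Nat.mod_lt _ h0
  have hr' : m ∣ 12 * r' + c := by
    have : 12 * r' + c ≡ 12 * r + c [MOD m] :=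
      Nat.ModEq.add_right c (Nat.ModEq.mul_left 12 (Nat.mod_modEq r m))
    exact (Nat.modEq_zero_iff_dvd).mp (this.trans ((Nat.modEq_zero_iff_dvd).mpr hr))
  rw [← Finset.card_range (n / m)]
  apply Finset.card_le_card_of_injOn (fun j => r' + j * m)
  · intro j hj
    simp only [mem_coe, mem_range] at hj
    rw [mem_coe, mem_filter, mem_range]
    constructor
    · have h1 : j + 1 ≤ n / m := hj
      calc r' + j * m < m + j * m := by omega
      _ = (j + 1) * m := by ring
      _ ≤ (n / m) * m := Nat.mul_le_mul_right m h1
      _ ≤ n := Nat.div_mul_le_self n m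
    · have h2 : 12 * (r' + j * m) + c = (12 * r' + c) + (12 * j) * m := by ring
      rw [h2]
      exact dvd_add hr' (dvd_mul_left m (12 * j))
  · intro a _ b _ hab
    simp only at hab
    exact Nat.eq_of_mul_eq_mul_right h0 (Nat.add_left_cancel hab)

lemma val_prod_ge (p n c : ℕ) (hp : p.Prime) (hc : 0 < c) (hco : Nat.Coprime 12 p) :
    padicValNat p n.factorial ≤ padicValNat p (∏ k ∈ range n, (12 * k + c)) := by
  haveI : Fact p.Prime := ⟨hp⟩
  rw [padicValNat_factorial (Nat.lt_succ_self (Nat.log p n))]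
  set b := Nat.log p n + 1 with hb
  have hterm : ∀ k : ℕ, 12 * k + c ≠ 0 := fun k => by omega
  calc ∑ i ∈ Finset.Ico 1 b, n / p ^ i
      ≤ ∑ i ∈ Finset.Ico 1 b, ((range n).filter (fun k => p ^ i ∣ 12 * k + c)).card :=
        Finset.sum_le_sum fun i _ => count_ge (p ^ i) c n (hco.pow_right i) (pow_pos hp.pos i)
    _ = ∑ i ∈ Finset.Ico 1 b, ∑ k ∈ range n, (if p ^ i ∣ 12 * k + c then 1 else 0) := by
        simp only [Finset.card_filter]
    _ = ∑ k ∈ range n, ∑ i ∈ Finset.Ico 1 b, (if p ^ i ∣ 12 * k + c then 1 else 0) :=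
        Finset.sum_comm
    _ = ∑ k ∈ range n, ((Finset.Ico 1 b).filter (fun i => p ^ i ∣ 12 * k + c)).card := by
        simp only [Finset.card_filter]
    _ ≤ ∑ k ∈ range n, padicValNat p (12 * k + c) := by
        refine Finset.sum_le_sum fun k _ => ?_
        have hsub : (Finset.Ico 1 b).filter (fun i => p ^ i ∣ 12 * k + c) ⊆
            Finset.Icc 1 (padicValNat p (12 * k + c)) := by
          intro i hi
          rw [Finset.mem_filter, Finset.mem_Ico] at hi
          rw [Finset.mem_Icc]
          exact ⟨hi.1.1, (padicValNat_dvd_iff_le (hterm k)).mp hi.2⟩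
        calc _ ≤ (Finset.Icc 1 (padicValNat p (12 * k + c))).card := Finset.card_le_card hsub
          _ = padicValNat p (12 * k + c) := by rw [Nat.card_Icc]; omega
    _ = padicValNat p (∏ k ∈ range n, (12 * k + c)) := by
        have h1 := Nat.factorization_prod (S := range n) (g := fun k => 12 * k + c)
          (fun k _ => hterm k)
        have h2 := congrArg (fun f => f p) h1
        simp only [Finset.sum_apply'] at h2
        rw [← Nat.factorization_def _ hp, h2]
        exact (Finset.sum_congr rfl fun k _ => Nat.factorization_def _ hp).symm

lemma key_dvd (n : ℕ) : n.factorial ^ 2 ∣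
    2 ^ (2 * n) * (3 ^ n * ((∏ k ∈ range n, (12 * k + 1)) * (∏ k ∈ range n, (12 * k + 5)))) := by
  set A := ∏ k ∈ range n, (12 * k + 1) with hAdef
  set B := ∏ k ∈ range n, (12 * k + 5) with hBdef
  have hA : A ≠ 0 := Finset.prod_ne_zero_iff.mpr fun k _ => by omega
  have hB : B ≠ 0 := Finset.prod_ne_zero_iff.mpr fun k _ => by omega
  have hL : n.factorial ^ 2 ≠ 0 := pow_ne_zero _ n.factorial_ne_zero
  have hR : 2 ^ (2 * n) * (3 ^ n * (A * B)) ≠ 0 := by positivity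
  rw [← Nat.factorization_le_iff_dvd hL hR]
  rw [Finsupp.le_def]
  intro p
  by_cases hp : p.Prime
  swap
  · simp [Nat.factorization_eq_zero_of_not_prime _ hp]
  haveI : Fact p.Prime := ⟨hp⟩
  rw [Nat.factorization_pow,
    Nat.factorization_mul (by positivity) (by positivity),
    Nat.factorization_mul (by positivity) (mul_ne_zero hA hB),
    Nat.factorization_mul hA hB,
    Nat.prime_two.factorization_pow, Nat.prime_three.factorization_pow]
  simp only [Finsupp.smul_apply, Finsupp.coe_add, Pi.add_apply, smul_eq_mul,
    Finsupp.single_apply]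
  rw [Nat.factorization_def _ hp, Nat.factorization_def _ hp, Nat.factorization_def _ hp]
  have hfact := sub_one_mul_padicValNat_factorial (p := p) n
  by_cases h2 : p = 2
  · subst h2
    have hv : padicValNat 2 n.factorial ≤ n := by omega
    simp only [if_pos rfl, if_neg (by norm_num : ¬ (3:ℕ) = 2)]
    norm_num
    omega
  by_cases h3 : p = 3
  · subst h3
    have hv : 2 * padicValNat 3 n.factorial ≤ n := by omega
    simp only [if_pos rfl, if_neg (by norm_num : ¬ (2 : ℕ) = 3)]
    norm_num
    omega
  · have hnd : ¬ p ∣ 12 := by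
      intro hd
      have h2le : 2 ≤ p := hp.two_le
      have hle : p ≤ 12 := Nat.le_of_dvd (by norm_num) hd
      interval_cases p <;> first
        | exact h2 rfl
        | exact h3 rfl
        | (revert hd hp; decide)
    have hco : Nat.Coprime 12 p := (hp.coprime_iff_not_dvd.mpr hnd).symm
    have hAv := val_prod_ge p n 1 hp (by norm_num) hco
    have hBv := val_prod_ge p n 5 hp (by norm_num) hco
    rw [← hAdef] at hAv
    rw [← hBdef] at hBv
    simp only [if_neg (Ne.symm h2), if_neg (Ne.symm h3)]
    omega

lemma asc_eval (x : ℚ) (n : ℕ) : (ascPochhammer ℚ n).eval x = ∏ k ∈ range n, (x + k) := by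
  induction n with
  | zero => simp
  | succ n ih => rw [ascPochhammer_succ_eval, prod_range_succ, ih]

/-- every coefficient of `₂F₁(1/12, 5/12; 1; 1728x)` is an integer:
`1728ⁿ·(1/12)ₙ·(5/12)ₙ/(n!)² ∈ ℤ` for all `n ≥ 0`. -/
theorem hypergeometric_coeffs_integral (n : ℕ) :
    ∃ m : ℤ, (1728 : ℚ) ^ n * (ascPochhammer ℚ n).eval (1 / 12) *
        (ascPochhammer ℚ n).eval (5 / 12) / ((n.factorial : ℚ)) ^ 2 = (m : ℚ) := by
  obtain ⟨m, hm⟩ := key_dvd n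
  refine ⟨m, ?_⟩
  have hfac : ((n.factorial : ℚ)) ^ 2 ≠ 0 := by positivity
  rw [div_eq_iff hfac, asc_eval, asc_eval]
  have e1 : (1728 : ℚ) ^ n * (∏ k ∈ range n, ((1:ℚ)/12 + k)) * ∏ k ∈ range n, ((5:ℚ)/12 + k)
      = ∏ k ∈ range n, ((1728 : ℚ) * ((1:ℚ)/12 + k) * ((5:ℚ)/12 + k)) := by
    rw [Finset.prod_mul_distrib, Finset.prod_mul_distrib, Finset.prod_const, Finset.card_range]
  rw [e1]
  have e2 : ∀ k ∈ range n, (1728 : ℚ) * ((1:ℚ)/12 + k) * ((5:ℚ)/12 + k)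
      = ((12 * ((12 * k + 1) * (12 * k + 5)) : ℕ) : ℚ) := by
    intro k _
    push_cast
    ring
  rw [Finset.prod_congr rfl e2, ← Nat.cast_prod]
  have e3 : ∏ k ∈ range n, (12 * ((12 * k + 1) * (12 * k + 5)))
      = 2 ^ (2 * n) * (3 ^ n * ((∏ k ∈ range n, (12 * k + 1)) * (∏ k ∈ range n, (12 * k + 5)))) := by
    rw [Finset.prod_mul_distrib, Finset.prod_mul_distrib, Finset.prod_const, Finset.card_range,
      pow_mul]
    norm_num
    have h12 : (12 : ℕ) ^ n = 4 ^ n * 3 ^ n := by rw [← mul_pow]; norm_num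
    rw [h12]
    ring
  rw [e3, hm]
  push_cast
  ring
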